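/- If s₁,…,s_n,s are exchangeable and almost surely distinct, then the rank of s among the n+1 values is uniformly distributed on {1,…,n+1}; consequently P(s ≤ s_(k)) = k/(n+1) for each order statistic s_(k) of s₁,…,s_n. -/

import Mathlib

open MeasureTheory

/-- The `k`-th smallest value (1-indexed) among `w 0, …, w (n-1)`. -/
noncomputable def kthSmallest {n : ℕ} (w : Fin n → ℝ) (k : ℕ) : ℝ :=
  ((List.ofFn w).mergeSort (· ≤ ·)).getD (k - 1) 0

/-- The rank of coordinate `i`. -/
noncomputable def rnk {m : ℕ} (w : Fin m → ℝ) (i : Fin m) : ℕ :=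
  (Finset.univ.filter (fun j => w j ≤ w i)).card

lemma rnk_eq_sum {m : ℕ} (w : Fin m → ℝ) (i : Fin m) :
    rnk w i = ∑ j : Fin m, if w j ≤ w i then 1 else 0 :=
  Finset.card_filter _ _

lemma one_le_rnk {m : ℕ} (w : Fin m → ℝ) (i : Fin m) : 1 ≤ rnk w i :=
  Finset.card_pos.mpr ⟨i, by simp⟩

lemma rnk_le {m : ℕ} (w : Fin m → ℝ) (i : Fin m) : rnk w i ≤ m :=
  (Finset.card_filter_le _ _).trans (by simp)

lemma rnk_lt_rnk {m : ℕ} {w : Fin m → ℝ} {i j : Fin m} (h : w i < w j) :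
    rnk w i < rnk w j := by
  apply Finset.card_lt_card
  rw [Finset.ssubset_def]
  constructor
  · exact Finset.monotone_filter_right _ (fun a _ ha => le_trans ha h.le)
  · intro hsub
    have := hsub (Finset.mem_filter.mpr ⟨Finset.mem_univ j, le_refl (w j)⟩)
    simp only [Finset.mem_filter] at this
    exact absurd this.2 (not_le.mpr h)

lemma rnk_injective {m : ℕ} {w : Fin m → ℝ} (hw : ∀ i j, i ≠ j → w i ≠ w j) :
    Function.Injective (rnk w) := by
  intro i j h
  by_contra hij
  rcases lt_trichotomy (w i) (w j) with hlt | heq | hgt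
  · exact absurd h (rnk_lt_rnk hlt).ne
  · exact hw i j hij heq
  · exact absurd h.symm (rnk_lt_rnk hgt).ne

lemma rnk_surjective {m : ℕ} {w : Fin m → ℝ} (hw : ∀ i j, i ≠ j → w i ≠ w j)
    {k : ℕ} (hk1 : 1 ≤ k) (hkm : k ≤ m) : ∃ i, rnk w i = k := by
  have himg : Finset.univ.image (rnk w) = Finset.Icc 1 m := by
    apply Finset.eq_of_subset_of_card_le
    · intro x hx
      simp only [Finset.mem_image] at hx
      obtain ⟨i, _, rfl⟩ := hx
      exact Finset.mem_Icc.mpr ⟨one_le_rnk w i, rnk_le w i⟩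
    · rw [Finset.card_image_of_injective _ (rnk_injective hw)]
      simp [Nat.card_Icc]
  have hk : k ∈ Finset.Icc 1 m := Finset.mem_Icc.mpr ⟨hk1, hkm⟩
  rw [← himg, Finset.mem_image] at hk
  obtain ⟨i, _, hi⟩ := hk
  exact ⟨i, hi⟩

lemma countP_ofFn {m : ℕ} (v : Fin m → ℝ) (t : ℝ) :
    (List.ofFn v).countP (fun x => decide (x ≤ t)) = ∑ i : Fin m, if v i ≤ t then 1 else 0 := by
  induction m with
  | zero => simp
  | succ m ih =>
    rw [List.ofFn_succ, List.countP_cons, Fin.sum_univ_succ, ih]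
    simp [add_comm]

lemma sorted_le_get_iff {L : List ℝ}
    (hs : ∀ i j : Fin L.length, i ≤ j → L.get i ≤ L.get j)
    {t : ℝ} (ht : ∀ x ∈ L, x ≠ t) {m : ℕ} (hm : m < L.length) :
    t ≤ L.get ⟨m, hm⟩ ↔
      (Finset.univ.filter (fun i : Fin L.length => L.get i ≤ t)).card ≤ m := by
  constructor
  · intro h
    have hsub : ∀ i ∈ Finset.univ.filter (fun i : Fin L.length => L.get i ≤ t),
        (i : ℕ) ∈ Finset.range m := by
      intro i hi
      simp only [Finset.mem_filter] at hi
      rw [Finset.mem_range]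
      by_contra hge
      push_neg at hge
      have h1 : L.get ⟨m, hm⟩ ≤ L.get i := hs ⟨m, hm⟩ i hge
      exact ht (L.get i) (L.get_mem _) (le_antisymm hi.2 (h.trans h1))
    calc (Finset.univ.filter (fun i : Fin L.length => L.get i ≤ t)).card
        ≤ (Finset.range m).card :=
          Finset.card_le_card_of_injOn (fun i => (i : ℕ)) hsub
            (fun a _ b _ hab => Fin.ext hab)
      _ = m := Finset.card_range m
  · intro h
    by_contra hlt
    push_neg at hlt
    have hmem : ∀ i ∈ Finset.range (m + 1),
        (⟨min i m, lt_of_le_of_lt (min_le_right _ _) hm⟩ : Fin L.length)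
          ∈ Finset.univ.filter (fun i : Fin L.length => L.get i ≤ t) := by
      intro i _
      simp only [Finset.mem_filter, Finset.mem_univ, true_and]
      exact le_of_lt (lt_of_le_of_lt (hs _ ⟨m, hm⟩ (min_le_right i m)) hlt)
    have hinj : Set.InjOn (fun i : ℕ =>
        (⟨min i m, lt_of_le_of_lt (min_le_right _ _) hm⟩ : Fin L.length))
        ↑(Finset.range (m + 1)) := by
      intro a ha b hb hab
      simp only [Finset.coe_range, Set.mem_Iio] at ha hb
      have : min a m = min b m := congrArg Fin.val hab
      omega
    have := Finset.card_le_card_of_injOn _ hmem hinj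
    rw [Finset.card_range] at this
    omega

lemma key_iff {n : ℕ} (w : Fin (n + 1) → ℝ) (hw : ∀ i j, i ≠ j → w i ≠ w j)
    {k : ℕ} (hk1 : 1 ≤ k) (hkn : k ≤ n) :
    (w (Fin.last n) ≤ kthSmallest (fun i : Fin n => w i.castSucc) k ↔
      rnk w (Fin.last n) ≤ k) := by
  set v : Fin n → ℝ := fun i => w i.castSucc with hv
  set t : ℝ := w (Fin.last n) with htdef
  set L : List ℝ := (List.ofFn v).mergeSort (· ≤ ·) with hL
  have hlen : L.length = n := by rw [hL, List.length_mergeSort, List.length_ofFn]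
  have hm : k - 1 < L.length := by omega
  have hget : kthSmallest v k = L.get ⟨k - 1, hm⟩ := by
    rw [kthSmallest, ← hL, List.getD_eq_getElem L 0 hm]
    simp [List.get_eq_getElem]
  have hsorted : L.Pairwise (· ≤ ·) := by
    have h := List.pairwise_mergeSort (le := fun a b : ℝ => decide (a ≤ b))
      (fun a b c hab hbc => by
        simp only [decide_eq_true_eq] at *; exact le_trans hab hbc)
      (fun a b => by simp [le_total]) (List.ofFn v)
    exact h.imp (fun hab => by simpa using hab)
  have hs : ∀ i j : Fin L.length, i ≤ j → L.get i ≤ L.get j :=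
    fun i j hij => hsorted.rel_get_of_le hij
  have hperm : L.Perm (List.ofFn v) := List.mergeSort_perm _ _
  have ht : ∀ x ∈ L, x ≠ t := by
    intro x hx
    have hx' : x ∈ List.ofFn v := hperm.mem_iff.mp hx
    rw [List.mem_ofFn] at hx'
    obtain ⟨i, rfl⟩ := hx'
    exact hw _ _ (Fin.castSucc_lt_last i).ne
  have hc : (Finset.univ.filter (fun i : Fin L.length => L.get i ≤ t)).card
      = ∑ i : Fin n, if v i ≤ t then 1 else 0 := by
    have h1 := countP_ofFn L.get t
    rw [List.ofFn_get] at h1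
    rw [Finset.card_filter, ← h1, hperm.countP_eq, countP_ofFn]
  have hrnk : rnk w (Fin.last n) = (∑ i : Fin n, if v i ≤ t then 1 else 0) + 1 := by
    rw [rnk_eq_sum, Fin.sum_univ_castSucc]
    simp [hv, htdef]
  rw [hget, sorted_le_get_iff hs ht hm, hc, hrnk]
  omega

/-- If `S 0, …, S (n-1), S n` are exchangeable and almost surely pairwise distinct,
then the rank of the test score `S n` among all `n+1` values is uniform on
`{1,…,n+1}`, and `P(S n ≤ s₍ₖ₎) = k/(n+1)` for each order statistic `s₍ₖ₎` of the
first `n` scores. -/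
theorem exchangeable_rank_uniform
    {Ω : Type*} [MeasurableSpace Ω] (μ : Measure Ω) [IsProbabilityMeasure μ]
    (n : ℕ) (S : Ω → Fin (n + 1) → ℝ) (hS : Measurable S)
    (hexch : ∀ σ : Equiv.Perm (Fin (n + 1)),
      Measure.map (fun ω i => S ω (σ i)) μ = Measure.map S μ)
    (hdistinct : ∀ i j : Fin (n + 1), i ≠ j → μ {ω | S ω i = S ω j} = 0) :
    (∀ k : ℕ, 1 ≤ k → k ≤ n + 1 →
      μ {ω | (Finset.univ.filter
          (fun j : Fin (n + 1) => S ω j ≤ S ω (Fin.last n))).card = k}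
        = 1 / (n + 1)) ∧
    (∀ k : ℕ, 1 ≤ k → k ≤ n →
      μ {ω | S ω (Fin.last n) ≤ kthSmallest (fun i : Fin n => S ω i.castSucc) k}
        = k / (n + 1)) := by
  classical
  set A : Set Ω := {ω | ∀ i j : Fin (n + 1), i ≠ j → S ω i ≠ S ω j} with hAdef
  have hAc : μ Aᶜ = 0 := by
    have hsub : Aᶜ ⊆ ⋃ (i : Fin (n + 1)) (j : Fin (n + 1)) (_ : i ≠ j),
        {ω | S ω i = S ω j} := by
      intro ω hω
      simp only [hAdef, Set.mem_compl_iff, Set.mem_setOf_eq] at hω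
      push_neg at hω
      obtain ⟨i, j, hij, hval⟩ := hω
      exact Set.mem_iUnion.mpr ⟨i, Set.mem_iUnion.mpr ⟨j,
        Set.mem_iUnion.mpr ⟨hij, hval⟩⟩⟩
    exact measure_mono_null hsub (measure_iUnion_null fun i =>
      measure_iUnion_null fun j => measure_iUnion_null fun h => hdistinct i j h)
  have hA1 : μ A = 1 := by
    rw [measure_congr (MeasureTheory.ae_eq_univ.mpr hAc), measure_univ]
  have hAm : MeasurableSet A := by
    have : A = ⋂ (i : Fin (n + 1)) (j : Fin (n + 1)) (_ : i ≠ j),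
        {ω | S ω i ≠ S ω j} := by
      ext ω
      simp only [hAdef, Set.mem_setOf_eq, Set.mem_iInter]
    rw [this]
    exact MeasurableSet.iInter fun i => MeasurableSet.iInter fun j =>
      MeasurableSet.iInter fun _ =>
        (measurableSet_eq_fun ((measurable_pi_apply i).comp hS)
          ((measurable_pi_apply j).comp hS)).compl
  have hmr : ∀ i : Fin (n + 1), Measurable fun w : Fin (n + 1) → ℝ => rnk w i := by
    intro i
    simp only [rnk_eq_sum]
    exact Finset.measurable_sum _ fun j _ =>
      Measurable.ite (measurableSet_le (measurable_pi_apply j) (measurable_pi_apply i))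
        measurable_const measurable_const
  have hMk : ∀ (i : Fin (n + 1)) (k : ℕ),
      MeasurableSet {w : Fin (n + 1) → ℝ | rnk w i = k} :=
    fun i k => (hmr i) (measurableSet_singleton k)
  have hEk : ∀ (i : Fin (n + 1)) (k : ℕ),
      MeasurableSet {ω | rnk (S ω) i = k} :=
    fun i k => hS (hMk i k)
  have hswap : ∀ (i : Fin (n + 1)) (k : ℕ),
      μ {ω | rnk (S ω) i = k} = μ {ω | rnk (S ω) (Fin.last n) = k} := by
    intro i k
    set σ := Equiv.swap i (Fin.last n) with hσ
    have hg : Measurable fun ω => (fun j => S ω (σ j)) :=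
      measurable_pi_lambda _ fun j => (measurable_pi_apply (σ j)).comp hS
    have hpure : ∀ w : Fin (n + 1) → ℝ,
        rnk (fun j => w (σ j)) (Fin.last n) = rnk w i := by
      intro w
      have hσl : σ (Fin.last n) = i := Equiv.swap_apply_right i (Fin.last n)
      rw [rnk_eq_sum, rnk_eq_sum]
      simp only [hσl]
      exact Equiv.sum_comp σ (fun j => if w j ≤ w i then 1 else 0)
    have hset : {ω | rnk (S ω) i = k}
        = (fun ω => (fun j => S ω (σ j))) ⁻¹' {w | rnk w (Fin.last n) = k} := by
      ext ω
      simp only [Set.mem_preimage, Set.mem_setOf_eq, hpure (S ω)]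
    rw [hset, ← Measure.map_apply hg (hMk (Fin.last n) k), hexch σ,
      Measure.map_apply hS (hMk (Fin.last n) k)]
    rfl
  have part1 : ∀ k : ℕ, 1 ≤ k → k ≤ n + 1 →
      μ {ω | rnk (S ω) (Fin.last n) = k} = 1 / (n + 1) := by
    intro k hk1 hk2
    set E : Fin (n + 1) → Set Ω := fun i => {ω | rnk (S ω) i = k} ∩ A with hE
    have hEm : ∀ i, MeasurableSet (E i) := fun i => (hEk i k).inter hAm
    have hdisj : Pairwise (Function.onFun Disjoint E) := by
      intro i j hij
      rw [Function.onFun, Set.disjoint_left]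
      intro ω hωi hωj
      exact hij (rnk_injective hωi.2 (hωi.1.trans hωj.1.symm))
    have hcover : ⋃ i, E i = A := by
      ext ω
      simp only [Set.mem_iUnion, hE, Set.mem_inter_iff, Set.mem_setOf_eq]
      constructor
      · rintro ⟨i, _, hA⟩; exact hA
      · intro hA
        obtain ⟨i, hi⟩ := rnk_surjective hA hk1 hk2
        exact ⟨i, hi, hA⟩
    have hsum : ∑' i : Fin (n + 1), μ (E i) = 1 := by
      rw [← measure_iUnion hdisj hEm, hcover, hA1]
    have hEi : ∀ i, μ (E i) = μ {ω | rnk (S ω) (Fin.last n) = k} :=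
      fun i => (measure_inter_conull hAc).trans (hswap i k)
    rw [tsum_fintype] at hsum
    simp only [hEi] at hsum
    rw [Finset.sum_const, Finset.card_univ, Fintype.card_fin, nsmul_eq_mul] at hsum
    rw [ENNReal.eq_div_iff (fun h => one_ne_zero (α := ENNReal) (add_eq_zero.mp h).2) (by simp)]
    push_cast at hsum ⊢
    exact hsum
  constructor
  · intro k hk1 hk2
    exact part1 k hk1 hk2
  · intro k hk1 hkn
    set D : Set Ω := ⋃ j ∈ Finset.Icc 1 k, {ω | rnk (S ω) (Fin.last n) = j} with hD
    have hae : {ω | S ω (Fin.last n) ≤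
        kthSmallest (fun i : Fin n => S ω i.castSucc) k} ∩ A = D ∩ A := by
      ext ω
      simp only [Set.mem_inter_iff, Set.mem_setOf_eq, hD, Set.mem_iUnion,
        Finset.mem_Icc]
      constructor
      · rintro ⟨hle, hA⟩
        have := (key_iff (S ω) hA hk1 hkn).mp hle
        exact ⟨⟨rnk (S ω) (Fin.last n), ⟨⟨one_le_rnk _ _, this⟩, rfl⟩⟩, hA⟩
      · rintro ⟨⟨j, ⟨⟨_, hjk⟩, hj⟩⟩, hA⟩
        refine ⟨(key_iff (S ω) hA hk1 hkn).mpr ?_, hA⟩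
        omega
    have h1 : μ {ω | S ω (Fin.last n) ≤
        kthSmallest (fun i : Fin n => S ω i.castSucc) k} = μ D := by
      rw [← measure_inter_conull (s := {ω | S ω (Fin.last n) ≤
        kthSmallest (fun i : Fin n => S ω i.castSucc) k}) hAc, hae,
        measure_inter_conull hAc]
    rw [h1, hD]
    rw [measure_biUnion_finset ?hd (fun j _ => hEk (Fin.last n) j)]
    · have : ∀ j ∈ Finset.Icc 1 k, μ {ω | rnk (S ω) (Fin.last n) = j}
          = 1 / (n + 1) := by
        intro j hj
        rw [Finset.mem_Icc] at hj
        exact part1 j hj.1 (by omega)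
      rw [Finset.sum_congr rfl this, Finset.sum_const, Nat.card_Icc]
      simp only [Nat.add_sub_cancel, nsmul_eq_mul]
      rw [ENNReal.div_eq_inv_mul, ENNReal.div_eq_inv_mul, mul_one, mul_comm]
    · intro a ha b hb hab
      rw [Function.onFun, Set.disjoint_left]
      intro ω hωa hωb
      exact hab (hωa.symm.trans hωb)
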